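/- Let m ≥ 1 and suppose P, P' ∈ ℝ[X] satisfy P·D_mᴺ = Q_mᴺ and P'·D_{m+1}ᴺ = Q_{m+1}ᴺ. Then P has exactly 2^m distinct real roots λ_{m,1} < λ_{m,2} < … < λ_{m,2^m} with λ_{m,1} = 0, λ_{m,2^m−1} < 5, and λ_{m,2^m} = 6, and P' has exactly 2^{m+1} distinct real roots λ_{m+1,1} < … < λ_{m+1,2^{m+1}} with the analogous properties. Moreover φ₋(λ_{m,k−1}) < λ_{m+1,k} < φ₋(λ_{m,k}) for all 2 ≤ k ≤ 2^m, and φ₊(λ_{m,2^{m+1}−k+1}) < λ_{m+1,k} < φ₊(λ_{m,2^{m+1}−k}) for all 2^m+1 ≤ k ≤ 2^{m+1}−1. -/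

import Mathlib

set_option maxHeartbeats 1000000


open Function

noncomputable section

/-- The polynomial map `f(x) = x(5-x)`. -/
def f (x : ℝ) : ℝ := x * (5 - x)

/-- `l(x) = x - 6`. -/
def lf (x : ℝ) : ℝ := x - 6

/-- `s(x) = (2-x)(4-x)(5-x) - (14-3x)`. -/
def sf (x : ℝ) : ℝ := (2 - x) * (4 - x) * (5 - x) - (14 - 3 * x)

/-- `r(x) = -2(2-x)(5-x)`. -/
def rf (x : ℝ) : ℝ := -2 * (2 - x) * (5 - x)

/-- The decreasing inverse branch of `f`. -/
def phim (x : ℝ) : ℝ := (5 - Real.sqrt (25 - 4 * x)) / 2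

/-- The increasing inverse branch of `f`. -/
def phip (x : ℝ) : ℝ := (5 + Real.sqrt (25 - 4 * x)) / 2

/-- `ltN m` is the auxiliary function `l̃_m` from the paper, meaningful for `m ≥ 1`
(the value at `m = 0` is a junk value `1`). -/
def ltN : ℕ → ℝ → ℝ
  | 0, _ => 1
  | 1, x => 4 - x
  | 2, x => (4 - f x) * sf x + 4 * lf x
  | m + 3, x => sf x * ltN (m + 2) (f x) - rf (f x) * lf x * ltN (m + 1) (f (f x))

/-- `qN m` is the function `q_mᴺ` from the paper, meaningful for `m ≥ 1`. -/
def qN (m : ℕ) (x : ℝ) : ℝ :=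
  if m = 1 then x ^ 2 - 6 * x
  else (2 - x) * ltN m x - 4 * (2 - x) * (5 - x) * ltN (m - 1) (f x)

open Polynomial

/-- The polynomial `F = 5X - X²`. -/
def F : ℝ[X] := C 5 * X - X ^ 2

/-- `Fiter i` is the `i`-fold composition `F^{(i)}`, with `Fiter 0 = X`. -/
def Fiter : ℕ → ℝ[X]
  | 0 => X
  | i + 1 => F.comp (Fiter i)

/-- Polynomial version of `l`. -/
def Lp : ℝ[X] := X - C 6

/-- Polynomial version of `s`. -/
def Sp : ℝ[X] := (C 2 - X) * (C 4 - X) * (C 5 - X) - (C 14 - C 3 * X)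

/-- Polynomial version of `r`. -/
def Rp : ℝ[X] := -C 2 * (C 2 - X) * (C 5 - X)

/-- Polynomial version of `l̃_m`. -/
def LtP : ℕ → ℝ[X]
  | 0 => 1
  | 1 => C 4 - X
  | 2 => (C 4 - F) * Sp + C 4 * Lp
  | m + 3 => Sp * (LtP (m + 2)).comp F - Rp.comp F * Lp * (LtP (m + 1)).comp (F.comp F)

/-- `QpN m` is the polynomial `Q_mᴺ`, satisfying `(QpN m).eval x = q_mᴺ x`. -/
def QpN (m : ℕ) : ℝ[X] :=
  if m = 1 then X ^ 2 - C 6 * X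
  else (C 2 - X) * LtP m - C 4 * (C 2 - X) * (C 5 - X) * ((LtP (m - 1)).comp F)

/-- `DpN m = ∏_{i=0}^{m-2} (F^{(i)} - 2)(F^{(i)} - 5)`, with `DpN 1 = 1`. -/
def DpN (m : ℕ) : ℝ[X] := ∏ i ∈ Finset.range (m - 1), ((Fiter i - C 2) * (Fiter i - C 5))

-- new definitions

def Hp : ℕ → ℝ[X]
  | 0 => 1
  | 1 => 1
  | 2 => C 5 - X
  | m + 3 => (C 5 - X) * (Hp (m + 2)).comp F + (C 2 * X - C 6) * (Hp (m + 1)).comp (F.comp F)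

def hp (m : ℕ) : ℝ[X] := X * LtP m - QpN m

lemma Fiter_comp (i : ℕ) : (Fiter i).comp F = Fiter (i + 1) := by
  induction i with
  | zero => simp [Fiter]
  | succ n ih => rw [Fiter, Polynomial.comp_assoc, ih]; rfl

lemma DpN_succ (m : ℕ) (hm : 1 ≤ m) :
    DpN (m + 1) = (X - C 2) * (X - C 5) * (DpN m).comp F := by
  obtain ⟨n, rfl⟩ : ∃ n, m = n + 1 := ⟨m - 1, by omega⟩
  rw [DpN, DpN]
  simp only [Nat.add_sub_cancel, Nat.succ_sub_one]
  rw [Finset.prod_range_succ']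
  have h : ∀ i : ℕ, (Fiter (i+1) - C 2) * (Fiter (i+1) - C 5)
      = (((Fiter i) - C 2) * ((Fiter i) - C 5)).comp F := fun i => by
    rw [mul_comp, sub_comp, sub_comp, C_comp, C_comp, Fiter_comp]
  simp only [h]
  rw [← Polynomial.prod_comp]
  simp only [Fiter]
  ring

lemma QpN_succ (m : ℕ) (hm : 1 ≤ m) :
    QpN (m + 1) = (C 2 - X) * LtP (m + 1) - C 4 * (C 2 - X) * (C 5 - X) * ((LtP m).comp F) := by
  rw [QpN, if_neg (by omega)]
  simp

lemma lemA (m : ℕ) (hm : 1 ≤ m) :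
    C 2 * QpN (m + 1) = (C 2 - X) * (X - C 6) * (hp m).comp F := by
  rcases m with _ | _ | k
  · omega
  · -- m = 1
    rw [QpN_succ 1 le_rfl, hp]
    rw [QpN, if_pos rfl]
    simp only [LtP, F, Sp, Lp]
    simp only [sub_comp, mul_comp, X_comp, C_comp, pow_comp, add_comp, one_comp]
    simp only [map_ofNat]
    ring
  · -- m = k + 2
    have h3 : k + 2 + 1 = k + 3 := rfl
    rw [QpN_succ (k + 2) (by omega), h3, LtP, hp]
    rw [QpN, if_neg (by omega)]
    simp only [Nat.add_sub_cancel]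
    simp only [F, Sp, Lp, Rp]
    simp only [sub_comp, mul_comp, X_comp, C_comp, pow_comp, add_comp, neg_comp, one_comp,
      Polynomial.comp_assoc]
    simp only [map_ofNat]
    ring

lemma lemB (m : ℕ) (hm : 1 ≤ m) :
    hp (m + 1) = (C 2 - X) * (C 5 - X) * (hp m).comp F + C 4 * (QpN m).comp F := by
  rcases m with _ | _ | k
  · omega
  · -- m = 1
    rw [hp, hp, QpN_succ 1 le_rfl]
    rw [QpN, if_pos rfl]
    simp only [LtP, F, Sp, Lp]
    simp only [sub_comp, mul_comp, X_comp, C_comp, pow_comp, add_comp, one_comp]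
    simp only [map_ofNat]
    ring
  · -- m = k + 2
    have h3 : k + 2 + 1 = k + 3 := rfl
    rw [hp, hp, QpN_succ (k + 2) (by omega), h3, LtP]
    rw [QpN, if_neg (by omega)]
    simp only [Nat.add_sub_cancel]
    simp only [F, Sp, Lp, Rp]
    simp only [sub_comp, mul_comp, X_comp, C_comp, pow_comp, add_comp, neg_comp, one_comp,
      Polynomial.comp_assoc]
    simp only [map_ofNat]
    ring

lemma keyIdent (m : ℕ) (hm : 1 ≤ m) :
    hp m = C 2 * X * Hp (m + 1) * DpN m ∧
    QpN m = X * (X - C 6) * (Hp m).comp F * DpN m := by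
  induction m with
  | zero => omega
  | succ n ih =>
    rcases Nat.eq_or_lt_of_le hm with h1 | h1
    · -- n + 1 = 1, i.e. n = 0
      have hn : n = 0 := by omega
      subst hn
      constructor
      · show hp 1 = _
        rw [hp, QpN, if_pos rfl]
        show _ = C 2 * X * (C 5 - X) * DpN 1
        rw [DpN]
        simp only [Nat.sub_self, Finset.range_zero, Finset.prod_empty, mul_one, LtP]
        simp only [map_ofNat]
        ring
      · rw [QpN, if_pos rfl]
        show _ = X * (X - C 6) * (1 : ℝ[X]).comp F * DpN 1
        rw [DpN]
        simp only [Nat.sub_self, Finset.range_zero, Finset.prod_empty, mul_one, one_comp]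
        ring
    · have hn : 1 ≤ n := by omega
      obtain ⟨ih1, ih2⟩ := ih hn
      have hQ : QpN (n + 1) = X * (X - C 6) * (Hp (n + 1)).comp F * DpN (n + 1) := by
        have h2 : (C 2 : ℝ[X]) ≠ 0 := C_ne_zero.mpr (by norm_num)
        apply mul_left_cancel₀ h2
        rw [lemA n hn, ih1, DpN_succ n hn]
        simp only [F]
        simp only [mul_comp, C_comp, X_comp]
        simp only [map_ofNat]
        ring
      refine ⟨?_, hQ⟩
      · rw [lemB n hn, ih1, ih2, DpN_succ n hn]
        rcases n with _ | j
        · omega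
        · have h3 : j + 1 + 1 + 1 = j + 3 := rfl
          rw [h3, Hp]
          simp only [F]
          simp only [mul_comp, C_comp, X_comp, sub_comp, add_comp, pow_comp,
            Polynomial.comp_assoc]
          simp only [map_ofNat]
          ring

lemma QpN_eq (m : ℕ) (hm : 1 ≤ m) :
    QpN m = X * (X - C 6) * (Hp m).comp F * DpN m := (keyIdent m hm).2

-- ### Degree facts

lemma F_natDegree : F.natDegree = 2 := by unfold F; compute_degree!

lemma F_leadingCoeff : F.leadingCoeff = -1 := by
  rw [leadingCoeff, F_natDegree]; unfold F; simp [coeff_X_pow]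

lemma Hp_deg : ∀ m : ℕ, (Hp m).natDegree ≤ 2^(m-1) - 1 ∧
    (2 ≤ m → (Hp m).natDegree = 2^(m-1) - 1 ∧ (Hp m).leadingCoeff = -1) := by
  intro m
  induction m using Nat.strong_induction_on with
  | _ m ih =>
    match m with
    | 0 => refine ⟨by simp [Hp], by omega⟩
    | 1 => refine ⟨by simp [Hp], by omega⟩
    | 2 =>
      have h1 : (Hp 2).natDegree = 1 := by rw [Hp]; compute_degree!
      have h2 : (Hp 2).leadingCoeff = -1 := by
        rw [leadingCoeff, h1, Hp]; simp
      exact ⟨by rw [h1]; norm_num, fun _ => ⟨by rw [h1]; norm_num, h2⟩⟩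
    | (k+3) =>
      obtain ⟨dA, lA⟩ := (ih (k+2) (by omega)).2 (by omega)
      have hBle := (ih (k+1) (by omega)).1
      simp only [Nat.add_sub_cancel, show k+2-1 = k+1 from rfl] at dA hBle
      have hpow1 : 1 ≤ 2^(k+1) := Nat.one_le_two_pow
      have hpow0 : 1 ≤ 2^k := Nat.one_le_two_pow
      have hpows : 2^(k+1) = 2 * 2^k := by rw [pow_succ]; ring
      have hpows2 : 2^(k+2) = 2 * 2^(k+1) := by rw [pow_succ]; ring
      have hpows3 : 2^(k+2) = 4 * 2^k := by rw [hpows2, hpows]; ring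
      have hHne : Hp (k+2) ≠ 0 := leadingCoeff_ne_zero.mp (by rw [lA]; norm_num)
      set A : ℝ[X] := (Hp (k+2)).comp F with hA
      set B : ℝ[X] := (Hp (k+1)).comp (F.comp F) with hB
      have hdA : A.natDegree = (2^(k+1)-1) * 2 := by
        rw [hA, natDegree_comp, dA, F_natDegree]
      have hlA : A.leadingCoeff = 1 := by
        rw [hA, leadingCoeff_comp (by rw [F_natDegree]; omega), lA, F_leadingCoeff, dA]
        have hodd : Odd (2^(k+1) - 1) := ⟨2^k - 1, by omega⟩
        rw [hodd.neg_one_pow]; norm_num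
      have hAne : A ≠ 0 := leadingCoeff_ne_zero.mp (by rw [hlA]; norm_num)
      have hc5x : ((C 5 : ℝ[X]) - X).natDegree = 1 := by compute_degree!
      have hc5xl : ((C 5 : ℝ[X]) - X).leadingCoeff = -1 := by
        rw [leadingCoeff, hc5x]; simp
      have hc5ne : ((C 5 : ℝ[X]) - X) ≠ 0 := leadingCoeff_ne_zero.mp (by rw [hc5xl]; norm_num)
      set fst : ℝ[X] := (C 5 - X) * A with hfst
      have hdfst : fst.natDegree = 2^(k+2) - 1 := by
        rw [hfst, natDegree_mul hc5ne hAne, hc5x, hdA]; omega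
      have hlfst : fst.leadingCoeff = -1 := by
        rw [hfst, leadingCoeff_mul, hc5xl, hlA]; norm_num
      have hfstne : fst ≠ 0 := leadingCoeff_ne_zero.mp (by rw [hlfst]; norm_num)
      set snd : ℝ[X] := (C 2 * X - C 6) * B with hsnd
      have hdsnd : snd.natDegree ≤ 1 + (2^k - 1) * 4 := by
        rw [hsnd]
        refine le_trans (natDegree_mul_le) ?_
        have h1 : ((C 2 : ℝ[X]) * X - C 6).natDegree ≤ 1 := by compute_degree
        have h2 : B.natDegree ≤ (2^k - 1) * 4 := by
          rw [hB, natDegree_comp, natDegree_comp, F_natDegree]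
          nlinarith [hBle]
        omega
      have hlt : 1 + (2^k-1)*4 < 2^(k+2) - 1 := by omega
      have hdeglt : snd.degree < fst.degree := by
        rw [degree_eq_natDegree hfstne, hdfst]
        calc snd.degree ≤ (snd.natDegree : WithBot ℕ) := degree_le_natDegree
          _ ≤ ((1 + (2^k-1)*4 : ℕ) : WithBot ℕ) := by exact_mod_cast Nat.cast_le.mpr hdsnd
          _ < ((2^(k+2) - 1 : ℕ) : WithBot ℕ) := by
              exact_mod_cast Nat.cast_lt.mpr hlt
      have hsum : Hp (k+3) = snd + fst := by rw [Hp, add_comm]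
      have hd3 : (Hp (k+3)).natDegree = 2^(k+2) - 1 := by
        rw [hsum, natDegree_add_eq_right_of_natDegree_lt, hdfst]
        rw [hdfst]
        omega
      have hl3 : (Hp (k+3)).leadingCoeff = -1 := by
        rw [hsum, leadingCoeff_add_of_degree_lt hdeglt, hlfst]
      have hiff : k+3-1 = k+2 := by omega
      refine ⟨?_, fun _ => ⟨by rw [hd3, hiff], hl3⟩⟩
      rw [hd3, hiff]

lemma Hp_natDegree (m : ℕ) (hm : 2 ≤ m) : (Hp m).natDegree = 2^(m-1) - 1 :=
  ((Hp_deg m).2 hm).1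

lemma Hp_ne_zero (m : ℕ) (hm : 1 ≤ m) : Hp m ≠ 0 := by
  rcases Nat.eq_or_lt_of_le hm with h | h
  · rw [← h]; norm_num [Hp]
  · exact leadingCoeff_ne_zero.mp (by rw [((Hp_deg m).2 h).2]; norm_num)

-- ### The evaluation function

def hh (m : ℕ) (x : ℝ) : ℝ := (Hp m).eval x

lemma evalF (x : ℝ) : F.eval x = f x := by simp [F, f]; ring

lemma hh_one (x : ℝ) : hh 1 x = 1 := by simp [hh, Hp]

lemma hh_two (x : ℝ) : hh 2 x = 5 - x := by simp [hh, Hp]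

lemma hh_rec (m : ℕ) (x : ℝ) :
    hh (m+3) x = (5 - x) * hh (m+2) (f x) + (2*x - 6) * hh (m+1) (f (f x)) := by
  simp [hh, Hp, eval_comp, evalF]

lemma hh_cont (m : ℕ) : Continuous (hh m) := by
  exact (Hp m).continuous

lemma val0 : ∀ m : ℕ, 1 ≤ m → hh m 0 = 3^m - 2^m := by
  intro m
  induction m using Nat.strong_induction_on with
  | _ m ih =>
    match m with
    | 0 => intro h; omega
    | 1 => intro _; rw [hh_one]; norm_num
    | 2 => intro _; rw [hh_two]; norm_num
    | (k+3) =>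
      intro _
      have h0 : f 0 = 0 := by simp [f]
      rw [hh_rec, h0, h0, ih (k+2) (by omega) (by omega), ih (k+1) (by omega) (by omega)]
      ring

lemma hh_zero_pos (m : ℕ) (hm : 1 ≤ m) : 0 < hh m 0 := by
  rw [val0 m hm]
  have : (2:ℝ)^m < 3^m := by
    apply pow_lt_pow_left₀ (by norm_num) (by norm_num)
    omega
  linarith

lemma f_le_neg6 {y : ℝ} (hy : y ≤ -6) : f y ≤ -6 := by unfold f; nlinarith

lemma PB : ∀ m : ℕ, (∀ y : ℝ, y ≤ -6 → 0 < hh (m+1) y) ∧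
    (∀ y : ℝ, y ≤ -6 → (3 - y) * hh (m+1) (f y) ≤ hh (m+2) y) := by
  intro m
  induction m with
  | zero =>
    constructor
    · intro y _; rw [hh_one]; norm_num
    · intro y hy; rw [hh_one, hh_two]; nlinarith
  | succ n ih =>
    obtain ⟨pos1, bnd2⟩ := ih
    have pos2 : ∀ y : ℝ, y ≤ -6 → 0 < hh (n+2) y := by
      intro y hy
      have h1 := bnd2 y hy
      have h2 := pos1 (f y) (f_le_neg6 hy)
      nlinarith
    refine ⟨pos2, ?_⟩
    intro y hy
    have hfy : f y ≤ -6 := f_le_neg6 hy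
    have h1 := bnd2 (f y) hfy
    have h2 := pos1 (f (f y)) (f_le_neg6 hfy)
    rw [hh_rec]
    have hyf : y - f y = y^2 - 4*y := by unfold f; ring
    nlinarith

lemma neg6 : ∀ m : ℕ, 2 ≤ m → hh m 6 < 0 := by
  intro m hm
  match m, hm with
  | 0, hm => omega
  | 1, hm => omega
  | 2, _ => rw [hh_two]; norm_num
  | (k+3), _ =>
    have hf6 : f 6 = -6 := by norm_num [f]
    have hf66 : f (-6) = -66 := by norm_num [f]
    have h1 := (PB k).2 (-6) (by norm_num)
    have h2 := (PB k).1 (-66) (by norm_num)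
    rw [hh_rec, hf6, hf66]
    rw [hf66] at h1
    nlinarith

-- ### phim / phip lemmas

lemma quadId {t : ℝ} (ht : t ≤ 25/4) (y : ℝ) :
    f y - t = -((y - phim t) * (y - phip t)) := by
  have hs : Real.sqrt (25 - 4*t) ^ 2 = 25 - 4*t := Real.sq_sqrt (by linarith)
  unfold f phim phip
  linear_combination (-(1:ℝ)/4) * hs

lemma f_phim {t : ℝ} (ht : t ≤ 25/4) : f (phim t) = t := by
  have := quadId ht (phim t); nlinarith [this]

lemma f_phip {t : ℝ} (ht : t ≤ 25/4) : f (phip t) = t := by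
  have := quadId ht (phip t); nlinarith [this]

lemma phim_le : ∀ t : ℝ, phim t ≤ 5/2 := by
  intro t; unfold phim
  nlinarith [Real.sqrt_nonneg (25 - 4*t)]

lemma phip_ge : ∀ t : ℝ, 5/2 ≤ phip t := by
  intro t; unfold phip
  nlinarith [Real.sqrt_nonneg (25 - 4*t)]

lemma phim_lt_phip {t : ℝ} (ht : t < 25/4) : phim t < phip t := by
  have h : 0 < Real.sqrt (25 - 4*t) := Real.sqrt_pos.mpr (by linarith)
  unfold phim phip; linarith

lemma phim_pos {t : ℝ} (h0 : 0 < t) (ht : t ≤ 25/4) : 0 < phim t := by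
  have h : Real.sqrt (25 - 4*t) < 5 := by
    rw [show (5:ℝ) = Real.sqrt 25 by rw [show (25:ℝ) = 5^2 by norm_num, Real.sqrt_sq]; norm_num]
    exact Real.sqrt_lt_sqrt (by linarith) (by linarith)
  unfold phim; linarith

lemma phip_lt_5 {t : ℝ} (h0 : 0 < t) : phip t < 5 := by
  have h : Real.sqrt (25 - 4*t) < 5 := by
    rcases le_or_gt (25 - 4*t) 0 with h | h
    · calc Real.sqrt (25-4*t) = 0 := Real.sqrt_eq_zero_of_nonpos h
        _ < 5 := by norm_num
    · rw [show (5:ℝ) = Real.sqrt 25 by rw [show (25:ℝ) = 5^2 by norm_num, Real.sqrt_sq]; norm_num]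
      exact Real.sqrt_lt_sqrt (by linarith) (by linarith)
  unfold phip; linarith

lemma phim_strictMono {t1 t2 : ℝ} (h : t1 < t2) (ht : t2 ≤ 25/4) : phim t1 < phim t2 := by
  have hs : Real.sqrt (25 - 4*t2) < Real.sqrt (25 - 4*t1) :=
    Real.sqrt_lt_sqrt (by linarith) (by linarith)
  unfold phim; linarith

lemma phip_strictAnti {t1 t2 : ℝ} (h : t1 < t2) (ht : t2 ≤ 25/4) : phip t2 < phip t1 := by
  have hs : Real.sqrt (25 - 4*t2) < Real.sqrt (25 - 4*t1) :=
    Real.sqrt_lt_sqrt (by linarith) (by linarith)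
  unfold phip; linarith

lemma phim_lt_3 (t : ℝ) : phim t < 3 := lt_of_le_of_lt (phim_le t) (by norm_num)

lemma phip_gt_3 {t : ℝ} (ht : t < 6) : 3 < phip t := by
  have h : 1 < Real.sqrt (25 - 4*t) := by
    have : (1:ℝ) = Real.sqrt 1 := by rw [Real.sqrt_one]
    rw [this]
    exact Real.sqrt_lt_sqrt (by norm_num) (by linarith)
  unfold phip; linarith

lemma phip_lt_6 {t : ℝ} (h0 : 0 < t) : phip t < 6 := lt_trans (phip_lt_5 h0) (by norm_num)

-- f maps: y strictly between the branches iff f y > t, etc.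
lemma f_gt_of_between {t y : ℝ} (ht : t ≤ 25/4) (h1 : phim t < y) (h2 : y < phip t) :
    t < f y := by
  have := quadId ht y; nlinarith

lemma phim_le_phip (t : ℝ) : phim t ≤ phip t := by
  unfold phim phip; nlinarith [Real.sqrt_nonneg (25 - 4*t)]

lemma f_lt_of_lt_phim {t y : ℝ} (ht : t ≤ 25/4) (h2 : y < phim t) : f y < t := by
  have hq := quadId ht y
  have h3 : y < phip t := lt_of_lt_of_le h2 (phim_le_phip t)
  nlinarith

lemma f_lt_of_gt_phip {t y : ℝ} (ht : t ≤ 25/4) (h2 : phip t < y) : f y < t := by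
  have hq := quadId ht y
  have h3 : phim t < y := by nlinarith [phim_le t, phip_ge t]
  nlinarith

-- ### auxiliary lemmas

lemma neg_one_pow_mod {a b : ℕ} (h : a % 2 = b % 2) : (-1:ℝ)^a = (-1)^b := by
  rcases Nat.even_or_odd a with ha | ha
  · have ha' := Nat.even_iff.mp ha
    rw [ha.neg_one_pow, (Nat.even_iff.mpr (by omega : b % 2 = 0)).neg_one_pow]
  · have ha' := Nat.odd_iff.mp ha
    rw [ha.neg_one_pow, (Nat.odd_iff.mpr (by omega : b % 2 = 1)).neg_one_pow]

lemma strictMonoOn_of_consecutive {g : ℕ → ℝ} {M : ℕ}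
    (h : ∀ k, 1 ≤ k → k + 1 ≤ M → g k < g (k+1)) : StrictMonoOn g (Set.Icc 1 M) := by
  intro a ha b hb hab
  have key : ∀ c, a + 1 ≤ c → c ≤ M → g a < g c := by
    intro c hc
    induction c, hc using Nat.le_induction with
    | base => intro hM; exact h a ha.1 hM
    | succ n hn ihn =>
      intro hM
      exact lt_trans (ihn (by omega)) (h n (by omega) hM)
  exact key b (by omega) hb.2

-- ### The invariant

structure InvN (m : ℕ) (mu : ℕ → ℝ) : Prop where
  mono : StrictMonoOn mu (Set.Icc 1 (2^(m-1) - 1))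
  pos : ∀ k, 1 ≤ k → k ≤ 2^(m-1) - 1 → 0 < mu k
  lt6 : ∀ k, 1 ≤ k → k ≤ 2^(m-1) - 1 → mu k < 6
  root_iff : ∀ y, hh m y = 0 ↔ ∃ k, 1 ≤ k ∧ k ≤ 2^(m-1) - 1 ∧ mu k = y
  gapsign : ∀ k y, k ≤ 2^(m-1) - 1 → (1 ≤ k → mu k < y) →
    (k+1 ≤ 2^(m-1)-1 → y < mu (k+1)) → 0 < (-1:ℝ)^k * hh m y
  esign : ∀ k, 1 ≤ k → k ≤ 2^(m-1)-1 → 0 < (-1:ℝ)^(k-1) * hh (m-1) (f (mu k))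

def lamOf (m : ℕ) (mu : ℕ → ℝ) : ℕ → ℝ := fun k =>
  if k ≤ 1 then 0
  else if k ≤ 2^(m-1) then phim (mu (k-1))
  else if k ≤ 2^m - 1 then phip (mu (2^m - k))
  else 6

lemma base_inv : InvN 1 (fun _ => 0) := by
  constructor
  · intro a ha b hb hab
    have h1 := (Set.mem_Icc.mp ha).1
    have h2 := (Set.mem_Icc.mp ha).2
    norm_num at h2
    omega
  · intro k h1 h2; omega
  · intro k h1 h2; omega
  · intro y
    rw [hh_one]
    constructor
    · intro h; norm_num at h
    · rintro ⟨k, h1, h2, _⟩; omega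
  · intro k y hk _ _
    have : k = 0 := by omega
    subst this
    rw [hh_one]; norm_num
  · intro k h1 h2; omega

lemma lam_pack {m : ℕ} (hm : 1 ≤ m) {mu : ℕ → ℝ} (inv : InvN m mu) :
    StrictMonoOn (lamOf m mu) (Set.Icc 1 (2^m)) ∧
    (∀ x : ℝ, x * (x - 6) * hh m (f x) = 0 ↔
      ∃ k, 1 ≤ k ∧ k ≤ 2^m ∧ lamOf m mu k = x) ∧
    lamOf m mu 1 = 0 ∧ lamOf m mu (2^m - 1) < 5 ∧ lamOf m mu (2^m) = 6 ∧
    (∀ k, 1 ≤ k → k ≤ 2^m → 0 < (-1:ℝ)^(k-1) * hh (m+1) (lamOf m mu k)) := by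
  have hn1 : 1 ≤ 2^(m-1) := Nat.one_le_two_pow
  have h2m : 2^m = 2 * 2^(m-1) := by
    conv_lhs => rw [show m = (m-1) + 1 by omega]
    rw [pow_succ]; ring
  -- value lemmas
  have hl1 : lamOf m mu 1 = 0 := by unfold lamOf; rw [if_pos le_rfl]
  have hl6 : lamOf m mu (2^m) = 6 := by
    unfold lamOf; rw [if_neg (by omega), if_neg (by omega), if_neg (by omega)]
  have hlo : ∀ k, 2 ≤ k → k ≤ 2^(m-1) → lamOf m mu k = phim (mu (k-1)) := by
    intro k hk1 hk2; unfold lamOf; rw [if_neg (by omega), if_pos hk2]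
  have hhi : ∀ k, 2^(m-1)+1 ≤ k → k ≤ 2^m - 1 → lamOf m mu k = phip (mu (2^m - k)) := by
    intro k hk1 hk2; unfold lamOf; rw [if_neg (by omega), if_neg (by omega), if_pos hk2]
  have hroot : ∀ j, 1 ≤ j → j ≤ 2^(m-1)-1 → hh m (mu j) = 0 :=
    fun j h1 h2 => (inv.root_iff (mu j)).mpr ⟨j, h1, h2, rfl⟩
  have hmu25 : ∀ j, 1 ≤ j → j ≤ 2^(m-1)-1 → mu j ≤ 25/4 :=
    fun j h1 h2 => le_of_lt (lt_trans (inv.lt6 j h1 h2) (by norm_num))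
  -- consecutive increase
  have hcons : ∀ k, 1 ≤ k → k + 1 ≤ 2^m → lamOf m mu k < lamOf m mu (k+1) := by
    intro k h1 h2
    by_cases hk1 : k = 1
    · subst hk1
      rw [hl1]
      by_cases hn2 : 2 ≤ 2^(m-1)
      · rw [hlo 2 le_rfl hn2]
        exact phim_pos (inv.pos 1 le_rfl (by omega)) (hmu25 1 le_rfl (by omega))
      · have h22 : (1:ℕ) + 1 = 2^m := by omega
        rw [h22, hl6]; norm_num
    · by_cases hk2 : k + 1 ≤ 2^(m-1)
      · rw [hlo k (by omega) (by omega), hlo (k+1) (by omega) hk2]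
        have hmono := inv.mono (Set.mem_Icc.mpr ⟨by omega, by omega⟩)
          (Set.mem_Icc.mpr ⟨by omega, by omega⟩) (show k-1 < k+1-1 by omega)
        have : k + 1 - 1 = k := by omega
        rw [this] at hmono
        exact phim_strictMono hmono (hmu25 k (by omega) (by omega))
      · by_cases hk3 : k ≤ 2^(m-1)
        · -- k = 2^(m-1), middle gap
          have hkn : k = 2^(m-1) := by omega
          have hn2 : 2 ≤ 2^(m-1) := by omega
          rw [hlo k (by omega) hk3, hhi (k+1) (by omega) (by omega)]
          have he : 2^m - (k+1) = k - 1 := by omega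
          rw [he]
          exact phim_lt_phip (lt_of_lt_of_le (inv.lt6 (k-1) (by omega) (by omega)) (by norm_num))
        · by_cases hk4 : k + 1 ≤ 2^m - 1
          · rw [hhi k (by omega) (by omega), hhi (k+1) (by omega) hk4]
            have hmono := inv.mono (Set.mem_Icc.mpr ⟨by omega, by omega⟩)
              (Set.mem_Icc.mpr ⟨by omega, by omega⟩) (show 2^m - (k+1) < 2^m - k by omega)
            exact phip_strictAnti hmono (hmu25 (2^m - k) (by omega) (by omega))
          · have hk5 : k + 1 = 2^m := by omega
            rw [hhi k (by omega) (by omega), hk5, hl6]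
            exact phip_lt_6 (inv.pos (2^m - k) (by omega) (by omega))
  have hmono : StrictMonoOn (lamOf m mu) (Set.Icc 1 (2^m)) :=
    strictMonoOn_of_consecutive hcons
  -- sign of hh (m+1) at the lam points
  have hsign : ∀ k, 1 ≤ k → k ≤ 2^m → 0 < (-1:ℝ)^(k-1) * hh (m+1) (lamOf m mu k) := by
    intro k h1 h2
    by_cases hk1 : k = 1
    · subst hk1
      rw [hl1]
      simpa using hh_zero_pos (m+1) (by omega)
    · by_cases hk6 : k = 2^m
      · subst hk6
        rw [hl6]
        have hodd : Odd (2^m - 1) := ⟨2^(m-1) - 1, by omega⟩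
        rw [hodd.neg_one_pow]
        have := neg6 (m+1) (by omega)
        linarith
      · -- interior point; requires m ≥ 2
        have hm2 : 2 ≤ m := by
          by_contra hc
          have : m = 1 := by omega
          subst this
          norm_num at h2m ⊢
          omega
        obtain ⟨j, rfl⟩ : ∃ j, m = j + 2 := ⟨m - 2, by omega⟩
        rw [show j + 2 + 1 = j + 3 from rfl, hh_rec]
        by_cases hk2 : k ≤ 2^(j+2-1)
        · -- lower branch
          rw [hlo k (by omega) hk2, f_phim (hmu25 (k-1) (by omega) (by omega))]
          rw [hroot (k-1) (by omega) (by omega)]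
          have hes := inv.esign (k-1) (by omega) (by omega)
          rw [show k - 1 - 1 = k - 2 from by omega] at hes
          simp only [show (j+2-1 : ℕ) = j+1 from rfl] at hes
          have hx3 : phim (mu (k-1)) < 3 := phim_lt_3 _
          have hpar : (-1:ℝ)^(k-1) = -(-1:ℝ)^(k-2) := by
            rw [show k - 1 = (k-2) + 1 from by omega, pow_succ]; ring
          rw [hpar]
          nlinarith [mul_pos hes (show (0:ℝ) < 6 - 2 * phim (mu (k-1)) by linarith)]
        · -- upper branch
          rw [hhi k (by omega) (by omega), f_phip (hmu25 (2^(j+2)-k) (by omega) (by omega))]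
          rw [hroot (2^(j+2)-k) (by omega) (by omega)]
          have hes := inv.esign (2^(j+2)-k) (by omega) (by omega)
          simp only [show (j+2-1 : ℕ) = j+1 from rfl] at hes
          have hx3 : 3 < phip (mu (2^(j+2)-k)) :=
            phip_gt_3 (inv.lt6 (2^(j+2)-k) (by omega) (by omega))
          have hpar : (-1:ℝ)^(k-1) = (-1)^(2^(j+2)-k-1) := neg_one_pow_mod (by omega)
          rw [hpar]
          nlinarith [mul_pos hes (show (0:ℝ) < 2 * phip (mu (2^(j+2)-k)) - 6 by linarith)]
  -- root characterization
  have hiff : ∀ x : ℝ, x * (x - 6) * hh m (f x) = 0 ↔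
      ∃ k, 1 ≤ k ∧ k ≤ 2^m ∧ lamOf m mu k = x := by
    intro x
    constructor
    · intro hx
      rcases mul_eq_zero.mp hx with h12 | h3
      · rcases mul_eq_zero.mp h12 with h0 | h6
        · exact ⟨1, le_rfl, by omega, by rw [hl1, h0]⟩
        · exact ⟨2^m, by omega, le_rfl, by rw [hl6]; linarith [h6]⟩
      · obtain ⟨j, hj1, hj2, hjx⟩ := (inv.root_iff _).mp h3
        have hq := quadId (t := mu j) (by linarith [hmu25 j hj1 hj2]) x
        have hfx0 : f x - mu j = 0 := by rw [hjx]; ring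
        have hq2 : (x - phim (mu j)) * (x - phip (mu j)) = 0 := by linarith [hq]
        rcases mul_eq_zero.mp hq2 with hc | hc
        · refine ⟨j+1, by omega, by omega, ?_⟩
          rw [hlo (j+1) (by omega) (by omega)]
          have : j + 1 - 1 = j := by omega
          rw [this]
          linarith
        · refine ⟨2^m - j, by omega, by omega, ?_⟩
          rw [hhi (2^m - j) (by omega) (by omega)]
          have : 2^m - (2^m - j) = j := by omega
          rw [this]
          linarith
    · rintro ⟨k, h1, h2, rfl⟩
      by_cases hk1 : k = 1
      · subst hk1; rw [hl1]; ring
      · by_cases hk6 : k = 2^m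
        · subst hk6; rw [hl6]; norm_num
        · by_cases hk2 : k ≤ 2^(m-1)
          · rw [hlo k (by omega) hk2, f_phim (hmu25 (k-1) (by omega) (by omega)),
              hroot (k-1) (by omega) (by omega)]
            ring
          · rw [hhi k (by omega) (by omega), f_phip (hmu25 (2^m - k) (by omega) (by omega)),
              hroot (2^m - k) (by omega) (by omega)]
            ring
  -- lam (2^m - 1) < 5
  have hl5 : lamOf m mu (2^m - 1) < 5 := by
    by_cases hm1 : m = 1
    · subst hm1
      norm_num
      rw [hl1]; norm_num
    · have hn2 : 2 ≤ 2^(m-1) := by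
        have : 2^1 ≤ 2^(m-1) := Nat.pow_le_pow_right (by norm_num) (by omega)
        omega
      rw [hhi (2^m - 1) (by omega) le_rfl]
      have : 2^m - (2^m - 1) = 1 := by omega
      rw [this]
      exact phip_lt_5 (inv.pos 1 le_rfl (by omega))
  exact ⟨hmono, hiff, hl1, hl5, hl6, hsign⟩

lemma step_inv {m : ℕ} (hm : 1 ≤ m) {mu : ℕ → ℝ} (inv : InvN m mu) :
    ∃ mu' : ℕ → ℝ, InvN (m+1) mu' ∧
      (∀ k, 1 ≤ k → k ≤ 2^m - 1 → lamOf m mu k < mu' k ∧ mu' k < lamOf m mu (k+1)) := by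
  obtain ⟨hmono, hiff, hl1, hl5, hl6, hsign⟩ := lam_pack hm inv
  have hn1 : 1 ≤ 2^(m-1) := Nat.one_le_two_pow
  have h2m : 2^m = 2 * 2^(m-1) := by
    conv_lhs => rw [show m = (m-1) + 1 by omega]
    rw [pow_succ]; ring
  have hmu25 : ∀ j, 1 ≤ j → j ≤ 2^(m-1)-1 → mu j ≤ 25/4 :=
    fun j h1 h2 => le_of_lt (lt_trans (inv.lt6 j h1 h2) (by norm_num))
  have hlo : ∀ k, 2 ≤ k → k ≤ 2^(m-1) → lamOf m mu k = phim (mu (k-1)) := by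
    intro k hk1 hk2; unfold lamOf; rw [if_neg (by omega), if_pos hk2]
  have hhi : ∀ k, 2^(m-1)+1 ≤ k → k ≤ 2^m - 1 → lamOf m mu k = phip (mu (2^m - k)) := by
    intro k hk1 hk2; unfold lamOf; rw [if_neg (by omega), if_neg (by omega), if_pos hk2]
  -- IVT: a root in each gap
  have exR : ∀ k, 1 ≤ k → k ≤ 2^m - 1 →
      ∃ y, (lamOf m mu k < y ∧ y < lamOf m mu (k+1)) ∧ hh (m+1) y = 0 := by
    intro k h1 h2
    have hs1 := hsign k h1 (by omega)
    have hs2 := hsign (k+1) (by omega) (by omega)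
    have hgc : Continuous fun y => (-1:ℝ)^(k-1) * hh (m+1) y :=
      continuous_const.mul (hh_cont (m+1))
    have hab : lamOf m mu k < lamOf m mu (k+1) :=
      hmono (Set.mem_Icc.mpr ⟨h1, by omega⟩) (Set.mem_Icc.mpr ⟨by omega, by omega⟩)
        (by omega)
    have hgb : (-1:ℝ)^(k-1) * hh (m+1) (lamOf m mu (k+1)) < 0 := by
      have hpar : (-1:ℝ)^(k+1-1) = -(-1:ℝ)^(k-1) := by
        rw [show k+1-1 = (k-1)+1 from by omega, pow_succ]; ring
      rw [hpar] at hs2; linarith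
    have hsub := intermediate_value_Ioo' (le_of_lt hab) hgc.continuousOn
    have h0mem : (0:ℝ) ∈ Set.Ioo ((-1:ℝ)^(k-1) * hh (m+1) (lamOf m mu (k+1)))
        ((-1:ℝ)^(k-1) * hh (m+1) (lamOf m mu k)) := ⟨hgb, hs1⟩
    obtain ⟨y, hy, hy0⟩ := hsub h0mem
    refine ⟨y, ⟨hy.1, hy.2⟩, ?_⟩
    have hne : (-1:ℝ)^(k-1) ≠ 0 := pow_ne_zero _ (by norm_num)
    rcases mul_eq_zero.mp hy0 with h | h
    · exact absurd h hne
    · exact h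
  choose g hg using exR
  set mu' : ℕ → ℝ := fun k => if h : 1 ≤ k ∧ k ≤ 2^m - 1 then g k h.1 h.2 else 0 with hmu'
  have hspec : ∀ k, 1 ≤ k → k ≤ 2^m - 1 →
      (lamOf m mu k < mu' k ∧ mu' k < lamOf m mu (k+1)) ∧ hh (m+1) (mu' k) = 0 := by
    intro k h1 h2
    simp only [hmu', dif_pos (⟨h1, h2⟩ : 1 ≤ k ∧ k ≤ 2^m - 1)]
    exact hg k h1 h2
  have hlamnn : ∀ k, 1 ≤ k → k ≤ 2^m → 0 ≤ lamOf m mu k := by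
    intro k h1 h2
    rcases Nat.eq_or_lt_of_le h1 with h | h
    · rw [← h, hl1]
    · have := hmono (Set.mem_Icc.mpr ⟨le_rfl, by omega⟩) (Set.mem_Icc.mpr ⟨h1, h2⟩) h
      rw [hl1] at this
      linarith
  have hlam6 : ∀ k, 1 ≤ k → k ≤ 2^m → lamOf m mu k ≤ 6 := by
    intro k h1 h2
    rcases Nat.eq_or_lt_of_le h2 with h | h
    · rw [h, hl6]
    · have := hmono (Set.mem_Icc.mpr ⟨h1, by omega⟩) (Set.mem_Icc.mpr ⟨by omega, le_rfl⟩) h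
      rw [hl6] at this
      linarith
  have hcons' : ∀ k, 1 ≤ k → k + 1 ≤ 2^m - 1 → mu' k < mu' (k+1) := by
    intro k h1 h2
    have hs1 := (hspec k h1 (by omega)).1.2
    have hs2 := (hspec (k+1) (by omega) h2).1.1
    linarith
  have hmono' : StrictMonoOn mu' (Set.Icc 1 (2^m - 1)) :=
    strictMonoOn_of_consecutive hcons'
  have hpos' : ∀ k, 1 ≤ k → k ≤ 2^m - 1 → 0 < mu' k := by
    intro k h1 h2
    have := (hspec k h1 h2).1.1
    have h0 := hlamnn k h1 (by omega)
    linarith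
  have hlt6' : ∀ k, 1 ≤ k → k ≤ 2^m - 1 → mu' k < 6 := by
    intro k h1 h2
    have := (hspec k h1 h2).1.2
    have h6 := hlam6 (k+1) (by omega) (by omega)
    linarith
  have hriff : ∀ y, hh (m+1) y = 0 ↔ ∃ k, 1 ≤ k ∧ k ≤ 2^m - 1 ∧ mu' k = y := by
    intro y
    constructor
    · intro hy
      by_contra hno
      push_neg at hno
      have hyT : ∀ k, 1 ≤ k → k ≤ 2^m - 1 → mu' k ≠ y := fun k h1 h2 => hno k h1 h2
      set T : Finset ℝ := (Finset.Icc 1 (2^m - 1)).image mu' with hT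
      have hinj : Set.InjOn mu' (Finset.Icc 1 (2^m - 1)) := by
        intro a ha b hb hab
        simp only [Finset.coe_Icc] at ha hb
        exact hmono'.injOn ha hb hab
      have hcardT : T.card = 2^m - 1 := by
        rw [hT, Finset.card_image_of_injOn hinj, Nat.card_Icc]
        omega
      have hyNT : y ∉ T := by
        intro hyT'
        obtain ⟨k, hk, hky⟩ := Finset.mem_image.mp hyT'
        rw [Finset.mem_Icc] at hk
        exact hyT k hk.1 hk.2 hky
      have hsub : insert y T ⊆ (Hp (m+1)).roots.toFinset := by
        intro z hz
        rw [Multiset.mem_toFinset, mem_roots (Hp_ne_zero (m+1) (by omega))]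
        rcases Finset.mem_insert.mp hz with h | h
        · rw [h]; exact hy
        · obtain ⟨k, hk, hky⟩ := Finset.mem_image.mp h
          rw [Finset.mem_Icc] at hk
          rw [← hky]
          exact (hspec k hk.1 hk.2).2
      have hcard : (insert y T).card = 2^m := by
        rw [Finset.card_insert_of_notMem hyNT, hcardT]
        omega
      have hle : (insert y T).card ≤ (Hp (m+1)).roots.toFinset.card :=
        Finset.card_le_card hsub
      have hle2 : (Hp (m+1)).roots.toFinset.card ≤ Multiset.card (Hp (m+1)).roots :=
        Multiset.toFinset_card_le _
      have hle3 : Multiset.card (Hp (m+1)).roots ≤ (Hp (m+1)).natDegree :=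
        card_roots' _
      have hdeg : (Hp (m+1)).natDegree = 2^m - 1 := by
        have := Hp_natDegree (m+1) (by omega)
        simpa using this
      omega
    · rintro ⟨k, h1, h2, rfl⟩
      exact (hspec k h1 h2).2
  have hgap' : ∀ k y, k ≤ 2^m - 1 → (1 ≤ k → mu' k < y) →
      (k+1 ≤ 2^m - 1 → y < mu' (k+1)) → 0 < (-1:ℝ)^k * hh (m+1) y := by
    intro k y hk hlow hup
    set r := lamOf m mu (k+1) with hr
    have hrs : 0 < (-1:ℝ)^k * hh (m+1) r := by
      have := hsign (k+1) (by omega) (by omega)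
      rwa [show k+1-1 = k from by omega] at this
    have hrlow : 1 ≤ k → mu' k < r := fun h => (hspec k h (by omega)).1.2
    have hrup : k+1 ≤ 2^m - 1 → r < mu' (k+1) := fun h => (hspec (k+1) (by omega) h).1.1
    have hnr : ∀ z, (1 ≤ k → mu' k < z) → (k+1 ≤ 2^m - 1 → z < mu' (k+1)) →
        hh (m+1) z ≠ 0 := by
      intro z hz1 hz2 hz0
      obtain ⟨i, hi1, hi2, hiz⟩ := (hriff z).mp hz0
      rcases le_or_gt i k with h | h
      · have h1k : 1 ≤ k := le_trans hi1 h
        have : mu' i ≤ mu' k := by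
          rcases Nat.eq_or_lt_of_le h with he | hlt
          · rw [he]
          · exact le_of_lt (hmono' (Set.mem_Icc.mpr ⟨hi1, hi2⟩)
              (Set.mem_Icc.mpr ⟨h1k, by omega⟩) hlt)
        have := hz1 h1k
        linarith [hiz ▸ this]
      · have hik : k + 1 ≤ i := h
        have hik2 : k + 1 ≤ 2^m - 1 := by omega
        have : mu' (k+1) ≤ mu' i := by
          rcases Nat.eq_or_lt_of_le hik with he | hlt
          · rw [he]
          · exact le_of_lt (hmono' (Set.mem_Icc.mpr ⟨by omega, hik2⟩)
              (Set.mem_Icc.mpr ⟨by omega, hi2⟩) hlt)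
        have := hz2 hik2
        linarith [hiz ▸ this]
    by_contra hc
    push_neg at hc
    rcases eq_or_lt_of_le hc with he | hlt
    · -- hh y = 0
      have : hh (m+1) y = 0 := by
        have hne : (-1:ℝ)^k ≠ 0 := pow_ne_zero _ (by norm_num)
        rcases mul_eq_zero.mp he with h | h
        · exact absurd h hne
        · exact h
      exact hnr y hlow hup this
    · -- sign change between y and r
      have hgc : Continuous fun t => (-1:ℝ)^k * hh (m+1) t :=
        continuous_const.mul (hh_cont (m+1))
      have hyr : y ≠ r := by
        intro h; rw [h] at hlt; linarith
      rcases lt_or_gt_of_ne hyr with hor | hor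
      · obtain ⟨z, hz, hz0⟩ := intermediate_value_Ioo (le_of_lt hor) hgc.continuousOn
          (Set.mem_Ioo.mpr ⟨hlt, hrs⟩)
        have hzz : hh (m+1) z = 0 := by
          have hne : (-1:ℝ)^k ≠ 0 := pow_ne_zero _ (by norm_num)
          rcases mul_eq_zero.mp hz0 with h | h
          · exact absurd h hne
          · exact h
        exact hnr z (fun h => lt_trans (hlow h) hz.1) (fun h => lt_trans hz.2 (hrup h)) hzz
      · obtain ⟨z, hz, hz0⟩ := intermediate_value_Ioo' (le_of_lt hor) hgc.continuousOn
          (Set.mem_Ioo.mpr ⟨hlt, hrs⟩)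
        have hzz : hh (m+1) z = 0 := by
          have hne : (-1:ℝ)^k ≠ 0 := pow_ne_zero _ (by norm_num)
          rcases mul_eq_zero.mp hz0 with h | h
          · exact absurd h hne
          · exact h
        exact hnr z (fun h => lt_trans (hrlow h) hz.1) (fun h => lt_trans hz.2 (hup h)) hzz
  have hes' : ∀ k, 1 ≤ k → k ≤ 2^m - 1 → 0 < (-1:ℝ)^(k-1) * hh m (f (mu' k)) := by
    intro k h1 h2
    by_cases hm1 : m = 1
    · subst hm1
      rw [hh_one]
      have hk1 : k = 1 := by omega
      subst hk1
      norm_num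
    · have hm2 : 2 ≤ m := by omega
      have hn2 : 2 ≤ 2^(m-1) := by
        have : 2^1 ≤ 2^(m-1) := Nat.pow_le_pow_right (by norm_num) (by omega)
        omega
      obtain ⟨⟨hbl, hbu⟩, -⟩ := hspec k h1 h2
      by_cases hc1 : k ≤ 2^(m-1) - 1
      · -- strictly lower gaps
        rw [hlo (k+1) (by omega) (by omega)] at hbu
        rw [show k+1-1 = k from by omega] at hbu
        have hflt : f (mu' k) < mu k := f_lt_of_lt_phim (hmu25 k h1 hc1) hbu
        refine inv.gapsign (k-1) (f (mu' k)) (by omega) ?_ ?_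
        · intro hk1
          rw [hlo k (by omega) (by omega)] at hbl
          have hup2 : mu' k < phip (mu (k-1)) :=
            lt_of_lt_of_le hbu (le_trans (phim_le _) (phip_ge _))
          exact f_gt_of_between (hmu25 (k-1) hk1 (by omega)) hbl hup2
        · intro _
          rwa [show k-1+1 = k from by omega]
      · by_cases hc2 : k = 2^(m-1)
        · -- middle gap
          subst hc2
          rw [hlo (2^(m-1)) (by omega) le_rfl] at hbl
          rw [hhi (2^(m-1)+1) (by omega) (by omega),
            show 2^m - (2^(m-1)+1) = 2^(m-1) - 1 from by omega] at hbu
          have hfgt : mu (2^(m-1)-1) < f (mu' (2^(m-1))) :=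
            f_gt_of_between (hmu25 (2^(m-1)-1) (by omega) (by omega)) hbl hbu
          refine inv.gapsign (2^(m-1)-1) (f (mu' (2^(m-1)))) (by omega)
            (fun _ => hfgt) (fun h => absurd h (by omega))
        · by_cases hc3 : k = 2^m - 1
          · -- top gap
            subst hc3
            rw [hhi (2^m-1) (by omega) le_rfl,
              show 2^m - (2^m - 1) = 1 from by omega] at hbl
            have hflt : f (mu' (2^m-1)) < mu 1 :=
              f_lt_of_gt_phip (hmu25 1 le_rfl (by omega)) hbl
            have := inv.gapsign 0 (f (mu' (2^m-1))) (by omega)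
              (fun h => absurd h (by omega)) (fun _ => hflt)
            rw [show ((-1:ℝ)^(2^m-1-1)) = (-1)^(0:ℕ) from neg_one_pow_mod (by omega)]
            simpa using this
          · -- strictly upper gaps
            have hcc : 2^(m-1)+1 ≤ k ∧ k ≤ 2^m - 2 := by omega
            rw [hhi k (by omega) (by omega),
              show 2^m - k = (2^m - k - 1) + 1 from by omega] at hbl
            rw [hhi (k+1) (by omega) (by omega),
              show 2^m - (k+1) = 2^m - k - 1 from by omega] at hbu
            set j := 2^m - k - 1 with hj
            have hj1 : 1 ≤ j := by omega
            have hj2 : j + 1 ≤ 2^(m-1) - 1 := by omega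
            have hflt : f (mu' k) < mu (j+1) :=
              f_lt_of_gt_phip (hmu25 (j+1) (by omega) hj2) hbl
            have hfgt : mu j < f (mu' k) := by
              have hlow2 : phim (mu j) < mu' k :=
                lt_of_le_of_lt (le_trans (phim_le _) (phip_ge _)) hbl
              exact f_gt_of_between (hmu25 j hj1 (by omega)) hlow2 hbu
            have := inv.gapsign j (f (mu' k)) (by omega) (fun _ => hfgt) (fun _ => hflt)
            rw [show ((-1:ℝ)^(k-1)) = (-1)^j from neg_one_pow_mod (by omega)]
            exact this
  refine ⟨mu', ⟨?_, ?_, ?_, ?_, ?_, ?_⟩, fun k h1 h2 => (hspec k h1 h2).1⟩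
  · simpa only [Nat.add_sub_cancel] using hmono'
  · simpa only [Nat.add_sub_cancel] using hpos'
  · simpa only [Nat.add_sub_cancel] using hlt6'
  · simpa only [Nat.add_sub_cancel] using hriff
  · simpa only [Nat.add_sub_cancel] using hgap'
  · simpa only [Nat.add_sub_cancel] using hes'

lemma exists_inv : ∀ m, 1 ≤ m → ∃ mu, InvN m mu := by
  intro m hm
  induction m with
  | zero => omega
  | succ n ih =>
    rcases Nat.eq_or_lt_of_le hm with h | h
    · have hn : n = 0 := by omega
      subst hn
      exact ⟨_, base_inv⟩
    · obtain ⟨mu, inv⟩ := ih (by omega)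
      obtain ⟨mu', inv', _⟩ := step_inv (by omega) inv
      exact ⟨mu', inv'⟩

lemma Fiter_natDegree (i : ℕ) : (Fiter i).natDegree = 2^i := by
  induction i with
  | zero => simp [Fiter]
  | succ n ih => rw [Fiter, natDegree_comp, F_natDegree, ih, pow_succ]; ring

lemma DpN_ne_zero (m : ℕ) : DpN m ≠ 0 := by
  rw [DpN]
  apply Finset.prod_ne_zero_iff.mpr
  intro i _
  have hd := Fiter_natDegree i
  have hp : 1 ≤ 2^i := Nat.one_le_two_pow
  apply mul_ne_zero
  · intro h
    have h2 : Fiter i = C 2 := sub_eq_zero.mp h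
    rw [h2, natDegree_C] at hd
    omega
  · intro h
    have h2 : Fiter i = C 5 := sub_eq_zero.mp h
    rw [h2, natDegree_C] at hd
    omega

lemma P_eval {m : ℕ} (hm : 1 ≤ m) {P : ℝ[X]} (hP : P * DpN m = QpN m) (x : ℝ) :
    P.eval x = x * (x - 6) * hh m (f x) := by
  have hPeq : P = X * (X - C 6) * (Hp m).comp F := by
    apply mul_right_cancel₀ (DpN_ne_zero m)
    rw [hP, QpN_eq m hm]
  rw [hPeq]
  simp [hh, eval_comp, evalF]

theorem statement_19 (m : ℕ) (hm : 1 ≤ m) (P P' : ℝ[X])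
    (hP : P * DpN m = QpN m) (hP' : P' * DpN (m + 1) = QpN (m + 1)) :
    ∃ lam lam' : ℕ → ℝ,
      StrictMonoOn lam (Set.Icc 1 (2 ^ m)) ∧
      (∀ x : ℝ, P.eval x = 0 ↔ ∃ k : ℕ, 1 ≤ k ∧ k ≤ 2 ^ m ∧ lam k = x) ∧
      lam 1 = 0 ∧ lam (2 ^ m - 1) < 5 ∧ lam (2 ^ m) = 6 ∧
      StrictMonoOn lam' (Set.Icc 1 (2 ^ (m + 1))) ∧
      (∀ x : ℝ, P'.eval x = 0 ↔ ∃ k : ℕ, 1 ≤ k ∧ k ≤ 2 ^ (m + 1) ∧ lam' k = x) ∧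
      lam' 1 = 0 ∧ lam' (2 ^ (m + 1) - 1) < 5 ∧ lam' (2 ^ (m + 1)) = 6 ∧
      (∀ k : ℕ, 2 ≤ k → k ≤ 2 ^ m →
        phim (lam (k - 1)) < lam' k ∧ lam' k < phim (lam k)) ∧
      (∀ k : ℕ, 2 ^ m + 1 ≤ k → k ≤ 2 ^ (m + 1) - 1 →
        phip (lam (2 ^ (m + 1) - k + 1)) < lam' k ∧ lam' k < phip (lam (2 ^ (m + 1) - k))) := by
  obtain ⟨mu, inv⟩ := exists_inv m hm
  obtain ⟨mu', inv', hconn⟩ := step_inv hm inv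
  obtain ⟨hmono, hiff, hl1, hl5, hl6, -⟩ := lam_pack hm inv
  obtain ⟨hmono', hiff', hl1', hl5', hl6', -⟩ := lam_pack (show 1 ≤ m+1 by omega) inv'
  have h2m1 : 2^(m+1) = 2 * 2^m := by rw [pow_succ]; ring
  have hlam6 : ∀ k, 1 ≤ k → k ≤ 2^m → lamOf m mu k ≤ 6 := by
    intro k h1 h2
    rcases Nat.eq_or_lt_of_le h2 with h | h
    · rw [h, hl6]
    · have := hmono (Set.mem_Icc.mpr ⟨h1, by omega⟩) (Set.mem_Icc.mpr ⟨by omega, le_rfl⟩) h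
      rw [hl6] at this
      linarith
  refine ⟨lamOf m mu, lamOf (m+1) mu', hmono, ?_, hl1, hl5, hl6, hmono', ?_, hl1', hl5', hl6',
    ?_, ?_⟩
  · intro x
    rw [P_eval hm hP x]
    exact hiff x
  · intro x
    rw [P_eval (show 1 ≤ m+1 by omega) hP' x]
    exact hiff' x
  · -- lower interlacing
    intro k hk2 hk2m
    have hval : lamOf (m+1) mu' k = phim (mu' (k-1)) := by
      unfold lamOf
      rw [if_neg (by omega), if_pos (show k ≤ 2^(m+1-1) by simp only [Nat.add_sub_cancel]; omega)]
    obtain ⟨hc1, hc2⟩ := hconn (k-1) (by omega) (by omega)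
    rw [show k-1+1 = k from by omega] at hc2
    have hb1 : mu' (k-1) ≤ 25/4 := by
      have := hlam6 k (by omega) hk2m
      linarith
    have hb2 : lamOf m mu k ≤ 25/4 := by
      have := hlam6 k (by omega) hk2m
      linarith
    constructor
    · rw [hval]
      exact phim_strictMono hc1 hb1
    · rw [hval]
      exact phim_strictMono hc2 hb2
  · -- upper interlacing
    intro k hk1 hk2
    have hval : lamOf (m+1) mu' k = phip (mu' (2^(m+1) - k)) := by
      unfold lamOf
      rw [if_neg (by omega),
        if_neg (show ¬(k ≤ 2^(m+1-1)) by simp only [Nat.add_sub_cancel]; omega),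
        if_pos (by omega)]
    obtain ⟨hc1, hc2⟩ := hconn (2^(m+1) - k) (by omega) (by omega)
    have hb1 : lamOf m mu (2^(m+1) - k + 1) ≤ 25/4 := by
      have := hlam6 (2^(m+1) - k + 1) (by omega) (by omega)
      linarith
    have hb2 : mu' (2^(m+1) - k) ≤ 25/4 := by
      have h6 := hlam6 (2^(m+1) - k + 1) (by omega) (by omega)
      linarith
    constructor
    · rw [hval]
      exact phip_strictAnti hc2 hb1
    · rw [hval]
      exact phip_strictAnti hc1 hb2
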